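/- For Pair Matching, no randomized online algorithm can achieve a competitive ratio less than 3/2. Formally: for every behavioral strategy p : List ℚ → ℚ → ℝ with values in [0,1] and every N ∈ ℕ, there exists an input x₁,…,xₙ of pairwise distinct rationals in [0,1] with n ≥ N such that the expected number of correct answers Σᵢ qᵢ is at most 2n/3, where qᵢ = p [x₁,…,x_{i−1}] x_i if the correct answer for x_i is 'accept' and qᵢ = 1 − p [x₁,…,x_{i−1}] x_i otherwise (while the optimum is n). -/

import Mathlib

/-- The correct answer for item `i` of a Pair Matching input: `true` ('accept')
iff some other item of the input has matching value `1 − xᵢ`. -/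
def pmCorrect (l : List ℚ) (i : Fin l.length) : Bool :=
  decide (∃ j : Fin l.length, j ≠ i ∧ l.get i + l.get j = 1)

lemma pmCorrect_append_left (l t : List ℚ)
    (hcross : ∀ y ∈ l, ∀ z ∈ t, y + z ≠ 1) (i : Fin l.length) :
    pmCorrect (l ++ t) (Fin.cast (List.length_append (as := l) (bs := t)).symm (Fin.castAdd t.length i))
      = pmCorrect l i := by
  unfold pmCorrect
  rw [decide_eq_decide]
  constructor
  · rintro ⟨j, hj, hsum⟩
    have hjl : (j : ℕ) < l.length := by
      by_contra h
      push_neg at h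
      have hz : (l ++ t).get j = t.get ⟨(j : ℕ) - l.length, by
          have := j.isLt; simp [List.length_append] at this; omega⟩ := by
        simp [List.get_eq_getElem, List.getElem_append_right h]
      have hy : (l ++ t).get (Fin.cast (List.length_append (as := l) (bs := t)).symm (Fin.castAdd t.length i))
          = l.get i := by
        simp [List.get_eq_getElem, List.getElem_append_left i.isLt]
      rw [hy, hz] at hsum
      exact hcross _ (List.get_mem l _) _ (List.get_mem t _) hsum
    refine ⟨⟨j, hjl⟩, ?_, ?_⟩
    · intro h
      apply hj
      apply Fin.ext
      simpa using congrArg (Fin.val) h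
    · have h1 : (l ++ t).get j = l.get ⟨j, hjl⟩ := by
        simp [List.get_eq_getElem, List.getElem_append_left hjl]
      have h2 : (l ++ t).get (Fin.cast (List.length_append (as := l) (bs := t)).symm (Fin.castAdd t.length i))
          = l.get i := by
        simp [List.get_eq_getElem, List.getElem_append_left i.isLt]
      rw [h2, h1] at hsum
      exact hsum
  · rintro ⟨j, hj, hsum⟩
    refine ⟨Fin.cast (List.length_append (as := l) (bs := t)).symm (Fin.castAdd t.length j), ?_, ?_⟩
    · intro h
      apply hj
      apply Fin.ext
      simpa using congrArg (Fin.val) h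
    · simpa [List.get_eq_getElem, List.getElem_append_left i.isLt,
        List.getElem_append_left j.isLt] using hsum

noncomputable def pmSum (p : List ℚ → ℚ → ℝ) (l : List ℚ) : ℝ :=
  ∑ i : Fin l.length,
    (if pmCorrect l i then p (l.take (i : ℕ)) (l.get i)
     else 1 - p (l.take (i : ℕ)) (l.get i))

lemma pmSum_append (p : List ℚ → ℚ → ℝ) (l t : List ℚ)
    (hcross : ∀ y ∈ l, ∀ z ∈ t, y + z ≠ 1) :
    pmSum p (l ++ t) = pmSum p l +
      ∑ i : Fin t.length,
        (if pmCorrect (l ++ t) (Fin.cast (List.length_append (as := l) (bs := t)).symm (Fin.natAdd l.length i))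
         then p ((l ++ t).take (l.length + (i : ℕ))) (t.get i)
         else 1 - p ((l ++ t).take (l.length + (i : ℕ))) (t.get i)) := by
  unfold pmSum
  have hre : ∑ i : Fin (l ++ t).length,
      (if pmCorrect (l ++ t) i then p ((l ++ t).take (i : ℕ)) ((l ++ t).get i)
       else 1 - p ((l ++ t).take (i : ℕ)) ((l ++ t).get i)) =
      ∑ i : Fin (l.length + t.length),
        (if pmCorrect (l ++ t) (Fin.cast (List.length_append (as := l) (bs := t)).symm i)
         then p ((l ++ t).take (i : ℕ)) ((l ++ t).get (Fin.cast (List.length_append (as := l) (bs := t)).symm i))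
         else 1 - p ((l ++ t).take (i : ℕ))
            ((l ++ t).get (Fin.cast (List.length_append (as := l) (bs := t)).symm i))) := by
    exact Fintype.sum_equiv (finCongr (List.length_append (as := l) (bs := t))) _ _ (fun i => by simp)
  rw [hre, Fin.sum_univ_add]
  congr 1
  · apply Finset.sum_congr rfl
    intro i _
    rw [pmCorrect_append_left l t hcross i]
    have hget : (l ++ t).get (Fin.cast (List.length_append (as := l) (bs := t)).symm (Fin.castAdd t.length i))
        = l.get i := by
      simp [List.get_eq_getElem, List.getElem_append_left i.isLt]
    have htake : (l ++ t).take ((Fin.castAdd t.length i : Fin _) : ℕ) = l.take (i : ℕ) := by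
      simp [List.take_append, Nat.sub_eq_zero_of_le (le_of_lt i.isLt)]
    rw [hget, htake]
  · apply Finset.sum_congr rfl
    intro i _
    have hget : (l ++ t).get (Fin.cast (List.length_append (as := l) (bs := t)).symm (Fin.natAdd l.length i))
        = t.get i := by
      simp [List.get_eq_getElem, List.getElem_append_right (Nat.le_add_right l.length i)]
    rw [hget]
    rfl

lemma get_natAdd_fst (l t : List ℚ) (i : Fin t.length) :
    (l ++ t).get (Fin.cast (List.length_append (as := l) (bs := t)).symm (Fin.natAdd l.length i)) = t.get i := by
  simp [List.get_eq_getElem, List.getElem_append_right (Nat.le_add_right l.length i)]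

lemma sum_fin_one {M : Type*} [AddCommMonoid M] {n : ℕ} (h : n = 1) (f : Fin n → M) :
    ∑ i, f i = f ⟨0, by omega⟩ := by subst h; exact Fin.sum_univ_one f

lemma sum_fin_two {M : Type*} [AddCommMonoid M] {n : ℕ} (h : n = 2) (f : Fin n → M) :
    ∑ i, f i = f ⟨0, by omega⟩ + f ⟨1, by omega⟩ := by subst h; exact Fin.sum_univ_two f

lemma pmSum_snoc_single (p : List ℚ → ℚ → ℝ) (l : List ℚ) (x : ℚ)
    (hcross : ∀ y ∈ l, y + x ≠ 1) :
    pmSum p (l ++ [x]) = pmSum p l + (1 - p l x) := by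
  rw [pmSum_append p l [x]
    (by intro y hy z hz; simp only [List.mem_singleton] at hz; subst hz; exact hcross y hy)]
  congr 1
  rw [sum_fin_one (n := ([x] : List ℚ).length) rfl]
  have hfalse : ∀ i0 : Fin ([x] : List ℚ).length, pmCorrect (l ++ [x])
      (Fin.cast (List.length_append (as := l) (bs := [x])).symm (Fin.natAdd l.length i0)) = false := by
    intro i0
    apply decide_eq_false
    rintro ⟨j, hj, hsum⟩
    rw [get_natAdd_fst] at hsum
    have hi0 : (i0 : ℕ) < 1 := i0.isLt
    have hi0' : (i0 : ℕ) = 0 := by omega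
    have hget0 : ([x] : List ℚ).get i0 = x := by
      rcases i0 with ⟨v, hv⟩
      simp only at hi0'
      subst hi0'
      rfl
    rw [hget0] at hsum
    have hjlt : (j : ℕ) < l.length + 1 := by simpa using j.isLt
    rcases lt_or_ge (j : ℕ) l.length with h | h
    · have : (l ++ [x]).get j = l.get ⟨j, h⟩ := by
        simp [List.get_eq_getElem, List.getElem_append_left h]
      rw [this] at hsum
      exact hcross _ (List.get_mem l _) (by linarith [hsum])
    · have hjv : (j : ℕ) = l.length := by omega
      apply hj
      apply Fin.ext
      simp [hjv, hi0']
  rw [hfalse]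
  have h00 : ((⟨0, by simp⟩ : Fin ([x] : List ℚ).length) : ℕ) = 0 := rfl
  have htake : (l ++ [x]).take (l.length + 0) = l := by
    simp [List.take_append]
  rw [h00, htake]
  have hget0 : ([x] : List ℚ).get ⟨0, by simp⟩ = x := rfl
  rw [hget0]
  simp

lemma pmSum_snoc_pair (p : List ℚ → ℚ → ℝ) (l : List ℚ) (x : ℚ)
    (h1 : ∀ y ∈ l, y + x ≠ 1) (h2 : ∀ y ∈ l, y + (1 - x) ≠ 1) :
    pmSum p (l ++ [x, 1 - x]) = pmSum p l + p l x + p (l ++ [x]) (1 - x) := by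
  rw [pmSum_append p l [x, 1 - x] (by
    intro y hy z hz
    simp only [List.mem_cons, List.mem_singleton, List.not_mem_nil, or_false] at hz
    rcases hz with hz | hz
    · subst hz; exact h1 y hy
    · subst hz; exact h2 y hy)]
  rw [sum_fin_two (n := ([x, 1 - x] : List ℚ).length) rfl]
  have htrue : ∀ i0 : Fin ([x, 1 - x] : List ℚ).length, pmCorrect (l ++ [x, 1 - x])
      (Fin.cast (List.length_append (as := l) (bs := [x, 1 - x])).symm (Fin.natAdd l.length i0)) = true := by
    intro i0
    apply decide_eq_true
    have hi0 : (i0 : ℕ) < 2 := i0.isLt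
    have h10 : (1 - (i0 : ℕ)) < ([x, 1 - x] : List ℚ).length := by
      show 1 - (i0 : ℕ) < 2; omega
    refine ⟨Fin.cast (List.length_append (as := l) (bs := [x, 1 - x])).symm
      (Fin.natAdd l.length ⟨1 - (i0 : ℕ), h10⟩), ?_, ?_⟩
    · intro h
      have := congrArg Fin.val h
      simp only [Fin.coe_cast, Fin.coe_natAdd] at this
      omega
    · rw [get_natAdd_fst, get_natAdd_fst]
      rcases i0 with ⟨v, hv⟩
      have hv2 : v < 2 := hv
      interval_cases v
      · show x + (1 - x) = 1; ring
      · show (1 - x) + x = 1; ring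
  rw [htrue, htrue]
  have h00 : ((⟨0, by simp⟩ : Fin ([x, 1 - x] : List ℚ).length) : ℕ) = 0 := rfl
  have h11 : ((⟨1, by simp⟩ : Fin ([x, 1 - x] : List ℚ).length) : ℕ) = 1 := rfl
  rw [h00, h11]
  have htake0 : (l ++ [x, 1 - x]).take (l.length + 0) = l := by
    simp [List.take_append]
  have htake1 : (l ++ [x, 1 - x]).take (l.length + 1) = l ++ [x] := by
    rw [List.take_append]
    simp [List.take_of_length_le]
  rw [htake0, htake1]
  have g0 : ([x, 1 - x] : List ℚ).get ⟨0, by simp⟩ = x := rfl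
  have g1 : ([x, 1 - x] : List ℚ).get ⟨1, by simp⟩ = 1 - x := rfl
  rw [g0, g1]
  simp
  ring

noncomputable def pmA (k : ℕ) : ℚ := 1 / (k + 3)

lemma pmA_pos (k : ℕ) : 0 < pmA k := by
  unfold pmA; positivity

lemma pmA_le (k : ℕ) : pmA k ≤ 1 / 3 := by
  unfold pmA
  rw [div_le_div_iff₀ (by positivity) (by norm_num)]
  push_cast
  linarith [Nat.cast_nonneg (α := ℚ) k]

lemma pmA_inj {k m : ℕ} (h : pmA k = pmA m) : k = m := by
  unfold pmA at h
  have h3 : ((k : ℚ) + 3) ≠ 0 := by positivity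
  have h4 : ((m : ℚ) + 3) ≠ 0 := by positivity
  rw [div_eq_div_iff h3 h4] at h
  have : (k : ℚ) = m := by linarith
  exact_mod_cast this

lemma pm_aux (p : List ℚ → ℚ → ℝ) (hp : ∀ h x, 0 ≤ p h x ∧ p h x ≤ 1) (m : ℕ) :
    ∃ l : List ℚ, l.Nodup ∧ (∀ x ∈ l, ∃ k < m, x = pmA k ∨ x = 1 - pmA k) ∧
      m ≤ l.length ∧ pmSum p l ≤ 2 * (l.length : ℝ) / 3 := by
  induction m with
  | zero =>
      refine ⟨[], List.nodup_nil, by simp, by simp, ?_⟩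
      unfold pmSum
      simp
  | succ m ih =>
      obtain ⟨l, hnd, hmem, hlen, hsum⟩ := ih
      set x := pmA m with hxdef
      have hxle : x ≤ 1 / 3 := pmA_le m
      have hxpos : 0 < x := pmA_pos m
      have hxl : x ∉ l := by
        intro hx
        obtain ⟨k, hk, hcase | hcase⟩ := hmem x hx
        · exact Nat.lt_irrefl m (by rw [pmA_inj hcase.symm] at hk; exact hk)
        · have := pmA_pos k
          have := pmA_le k
          rw [hcase] at hxle
          linarith
      have hx'l : (1 - x) ∉ l := by
        intro hx
        obtain ⟨k, hk, hcase | hcase⟩ := hmem _ hx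
        · have := pmA_le k
          linarith [hcase]
        · have : pmA k = x := by linarith [hcase]
          exact Nat.lt_irrefl m (by rw [pmA_inj this] at hk; exact hk)
      have hcross1 : ∀ y ∈ l, y + x ≠ 1 := by
        intro y hy h
        exact hx'l (by rwa [show (1 : ℚ) - x = y by linarith])
      have hcross2 : ∀ y ∈ l, y + (1 - x) ≠ 1 := by
        intro y hy h
        exact hxl (by rwa [show x = y by linarith])
      by_cases hq : (1 : ℝ) / 3 ≤ p l x
      · refine ⟨l ++ [x], ?_, ?_, ?_, ?_⟩
        · rw [List.nodup_append']
          exact ⟨hnd, List.nodup_singleton x, by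
            intro y hy hy'
            simp only [List.mem_singleton] at hy'
            exact hxl (hy' ▸ hy)⟩
        · intro y hy
          rcases List.mem_append.mp hy with h | h
          · obtain ⟨k, hk, hc⟩ := hmem y h
            exact ⟨k, Nat.lt_succ_of_lt hk, hc⟩
          · simp only [List.mem_singleton] at h
            exact ⟨m, Nat.lt_succ_self m, Or.inl h⟩
        · rw [List.length_append]
          simpa using Nat.succ_le_succ hlen
        · rw [pmSum_snoc_single p l x hcross1, List.length_append]
          have h1 : p l x ≤ 1 := (hp l x).2
          have hl1 : ([x] : List ℚ).length = 1 := rfl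
          rw [hl1]
          push_cast
          linarith
      · push_neg at hq
        refine ⟨l ++ [x, 1 - x], ?_, ?_, ?_, ?_⟩
        · rw [List.nodup_append']
          refine ⟨hnd, ?_, ?_⟩
          · refine List.nodup_cons.mpr ⟨?_, List.nodup_singleton _⟩
            simp only [List.mem_singleton]
            intro h
            linarith [h]
          · intro y hy hy'
            simp only [List.mem_cons, List.mem_singleton, List.not_mem_nil, or_false] at hy'
            rcases hy' with h | h
            · exact hxl (h ▸ hy)
            · exact hx'l (h ▸ hy)
        · intro y hy
          rcases List.mem_append.mp hy with h | h
          · obtain ⟨k, hk, hc⟩ := hmem y h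
            exact ⟨k, Nat.lt_succ_of_lt hk, hc⟩
          · simp only [List.mem_cons, List.mem_singleton, List.not_mem_nil, or_false] at h
            rcases h with h | h
            · exact ⟨m, Nat.lt_succ_self m, Or.inl h⟩
            · exact ⟨m, Nat.lt_succ_self m, Or.inr h⟩
        · rw [List.length_append]
          have : ([x, 1 - x] : List ℚ).length = 2 := rfl
          omega
        · rw [pmSum_snoc_pair p l x hcross1 hcross2, List.length_append]
          have h1 : p (l ++ [x]) (1 - x) ≤ 1 := (hp _ _).2
          have : ([x, 1 - x] : List ℚ).length = 2 := rfl
          rw [this]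
          push_cast
          linarith

/-- For Pair Matching, no randomized online algorithm (in behavioral form)
achieves a competitive ratio less than `3/2`: for every strategy `p` with
values in `[0,1]` and every `N` there is an input of pairwise distinct
rationals in `[0,1]` of length `n ≥ N` on which the expected number of correct
answers is at most `2n/3` (while the optimum is `n`). -/
theorem pm_online_randomized_lower_bound
    (p : List ℚ → ℚ → ℝ) (hp : ∀ h x, 0 ≤ p h x ∧ p h x ≤ 1) (N : ℕ) :
    ∃ l : List ℚ,
      l.Nodup ∧ (∀ x ∈ l, 0 ≤ x ∧ x ≤ 1) ∧ N ≤ l.length ∧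
      (∑ i : Fin l.length,
        (if pmCorrect l i then p (l.take (i : ℕ)) (l.get i)
         else 1 - p (l.take (i : ℕ)) (l.get i))) ≤ 2 * (l.length : ℝ) / 3 := by
  obtain ⟨l, hnd, hmem, hlen, hsum⟩ := pm_aux p hp N
  refine ⟨l, hnd, ?_, hlen, hsum⟩
  intro y hy
  obtain ⟨k, _, hc | hc⟩ := hmem y hy
  · have := pmA_pos k
    have := pmA_le k
    constructor <;> [linarith [hc]; linarith [hc]]
  · have := pmA_pos k
    have := pmA_le k
    constructor <;> [linarith [hc]; linarith [hc]]
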